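/- arXiv:2106.02093 — 5 statements merged into one kernel-verified Lean document; each statement's English description precedes it below -/
import Mathlib

section
/- An equilibrium (S̄, 0, 1-S̄) of the SIR system with S̄ > 1/R is unstable: for any ε > 0 there exists an initial condition within ε of the equilibrium whose trajectory leaves a fixed neighborhood of the equilibrium (because I grows initially since I'(τ) = (R·S(τ) - 1)·I(τ) > 0 while R·S > 1). -/
open Real Set MeasureTheory intervalIntegral

noncomputable def sirG (R Sbar I0 : ℝ) : ℝ → ℝ :=
  fun J => I0 + Sbar - Sbar * Real.exp (-R * J) - J

lemma sirG_hasDerivAt (R Sbar I0 J : ℝ) :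
    HasDerivAt (sirG R Sbar I0) (R * Sbar * Real.exp (-R * J) - 1) J := by
  have h1 : HasDerivAt (fun x : ℝ => -R * x) (-R) J := by
    simpa using (hasDerivAt_id J).const_mul (-R)
  have h2 := (h1.exp).const_mul Sbar
  have h3 := ((hasDerivAt_const J (I0 + Sbar)).sub h2).sub (hasDerivAt_id J)
  refine h3.congr_deriv ?_
  ring

lemma sirG_cont (R Sbar I0 : ℝ) : Continuous (sirG R Sbar I0) := by
  unfold sirG; continuity

lemma sir_aux (R Sbar I0 : ℝ) (hRpos : 0 < R) (hSpos : 0 < Sbar)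
    (hRS : 1 < R * Sbar) (hI0 : 0 < I0) :
    ∃ S I C : ℝ → ℝ,
      (∀ τ ≥ (0:ℝ), HasDerivAt S (-R * S τ * I τ) τ) ∧
      (∀ τ ≥ (0:ℝ), HasDerivAt I (R * S τ * I τ - I τ) τ) ∧
      (∀ τ ≥ (0:ℝ), HasDerivAt C (I τ) τ) ∧
      S 0 = Sbar ∧ I 0 = I0 ∧ C 0 = 1 - Sbar ∧
      ∃ τ ≥ (0:ℝ), C τ - (1 - Sbar) = Real.log (R * Sbar) / R := by
  set g := sirG R Sbar I0 with hgdef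
  have hg0 : g 0 = I0 := by simp [hgdef, sirG]
  set Jt := Real.log (R * Sbar) / R with hJtdef
  have hlogpos : 0 < Real.log (R * Sbar) := Real.log_pos hRS
  have hJtpos : 0 < Jt := div_pos hlogpos hRpos
  have hexpJt : Real.exp (-R * Jt) = (R * Sbar)⁻¹ := by
    rw [hJtdef]
    rw [show -R * (Real.log (R * Sbar) / R) = -Real.log (R * Sbar) by
      field_simp]
    rw [Real.exp_neg, Real.exp_log (by positivity)]
  -- Step A : small r with g ≥ I0/2 on [-r,0]
  obtain ⟨r, hrpos, hgr⟩ : ∃ r > 0, ∀ u ∈ Icc (-r) (0:ℝ), I0 / 2 ≤ g u := by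
    have hc : ContinuousAt g 0 := (sirG_cont R Sbar I0).continuousAt
    rw [Metric.continuousAt_iff] at hc
    obtain ⟨d, hd, hball⟩ := hc (I0 / 2) (by positivity)
    refine ⟨d / 2, by positivity, fun u hu => ?_⟩
    have : dist u 0 < d := by
      rw [Real.dist_eq, sub_zero, abs_lt]
      obtain ⟨h1, h2⟩ := hu
      constructor <;> nlinarith
    have := hball this
    rw [Real.dist_eq, hg0] at this
    have := abs_lt.mp this
    linarith [this.1]
  -- Step B : g ≥ I0 on [0, Jt]
  have hmonoB : MonotoneOn g (Icc 0 Jt) := by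
    apply monotoneOn_of_deriv_nonneg (convex_Icc 0 Jt)
      ((sirG_cont R Sbar I0).continuousOn)
      (fun x _ => (sirG_hasDerivAt R Sbar I0 x).differentiableAt.differentiableWithinAt)
    intro x hx
    rw [interior_Icc] at hx
    rw [(sirG_hasDerivAt R Sbar I0 x).deriv]
    have : Real.exp (-R * Jt) ≤ Real.exp (-R * x) := by
      apply Real.exp_le_exp.mpr
      nlinarith [hx.2]
    rw [hexpJt] at this
    have h2 : R * Sbar * (R * Sbar)⁻¹ ≤ R * Sbar * Real.exp (-R * x) := by
      apply mul_le_mul_of_nonneg_left this (by positivity)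
    rw [mul_inv_cancel₀ (by positivity)] at h2
    linarith
  have hgB : ∀ u ∈ Icc (0:ℝ) Jt, I0 ≤ g u := by
    intro u hu
    have := hmonoB (left_mem_Icc.mpr hJtpos.le) hu hu.1
    rw [hg0] at this; exact this
  -- Step C : g strictly decreasing on [Jt, ∞)
  have hantiC : StrictAntiOn g (Ici Jt) := by
    apply strictAntiOn_of_deriv_neg (convex_Ici Jt)
      ((sirG_cont R Sbar I0).continuousOn)
    intro x hx
    rw [interior_Ici] at hx
    rw [(sirG_hasDerivAt R Sbar I0 x).deriv]
    have : Real.exp (-R * x) < Real.exp (-R * Jt) := by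
      apply Real.exp_lt_exp.mpr
      nlinarith [mem_Ioi.mp hx]
    rw [hexpJt] at this
    have h2 : R * Sbar * Real.exp (-R * x) < R * Sbar * (R * Sbar)⁻¹ :=
      mul_lt_mul_of_pos_left this (by positivity)
    rw [mul_inv_cancel₀ (by positivity)] at h2
    linarith
  -- Step D : unique root Jinf
  have hgJtpos : 0 < g Jt := lt_of_lt_of_le hI0 (hgB Jt ⟨hJtpos.le, le_refl _⟩)
  set M := I0 + Sbar + 1 + Jt with hMdef
  have hJtM : Jt ≤ M := by nlinarith
  have hgM : g M < 0 := by
    have : 0 < Real.exp (-R * M) := Real.exp_pos _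
    simp only [hgdef, sirG]
    nlinarith
  obtain ⟨Jinf, hJinfmem, hgJinf⟩ : ∃ Jinf ∈ Icc Jt M, g Jinf = 0 := by
    have := intermediate_value_Icc' hJtM ((sirG_cont R Sbar I0).continuousOn)
    have h0 : (0:ℝ) ∈ Icc (g M) (g Jt) := ⟨hgM.le, hgJtpos.le⟩
    obtain ⟨J, hJ, hJ0⟩ := this h0
    exact ⟨J, hJ, hJ0⟩
  have hJtJinf : Jt < Jinf := by
    rcases lt_or_eq_of_le hJinfmem.1 with h | h
    · exact h
    · exfalso; rw [← h] at hgJinf; linarith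
  have hJinfpos : 0 < Jinf := hJtpos.trans hJtJinf
  -- Step E : positivity of g on [-r, Jinf)
  have hgpos : ∀ u, -r ≤ u → u < Jinf → 0 < g u := by
    intro u hu1 hu2
    rcases le_or_gt u 0 with h | h
    · exact lt_of_lt_of_le (by positivity) (hgr u ⟨hu1, h⟩)
    rcases le_or_gt u Jt with h2 | h2
    · exact lt_of_lt_of_le hI0 (hgB u ⟨h.le, h2⟩)
    · have := hantiC (mem_Ici.mpr h2.le) (mem_Ici.mpr hJtJinf.le) hu2
      rw [hgJinf] at this
      exact this
  -- Step F : upper bound g u ≤ Jinf - u on [0, Jinf]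
  have hgub : ∀ u, 0 ≤ u → u ≤ Jinf → g u ≤ Jinf - u := by
    intro u hu1 hu2
    have hexp : Real.exp (-R * Jinf) ≤ Real.exp (-R * u) := by
      apply Real.exp_le_exp.mpr; nlinarith
    have h0 : I0 + Sbar - Sbar * Real.exp (-R * Jinf) - Jinf = 0 := hgJinf
    simp only [hgdef, sirG]
    nlinarith
  -- Step G : integrability
  have hintg : ∀ a b : ℝ, -r ≤ a → -r ≤ b → a < Jinf → b < Jinf →
      IntervalIntegrable (fun u => (g u)⁻¹) volume a b := by
    intro a b ha hb ha' hb'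
    apply ContinuousOn.intervalIntegrable
    apply ContinuousOn.inv₀ ((sirG_cont R Sbar I0).continuousOn)
    intro u hu
    rw [uIcc_eq_union] at hu
    have h1 : -r ≤ u ∧ u < Jinf := by
      rcases hu with h | h
      · exact ⟨ha.trans h.1, lt_of_le_of_lt h.2 hb'⟩
      · exact ⟨hb.trans h.1, lt_of_le_of_lt h.2 ha'⟩
    exact (hgpos u h1.1 h1.2).ne'
  -- Step H : h and its properties
  set h : ℝ → ℝ := fun J => ∫ u in (0:ℝ)..J, (g u)⁻¹ with hhdef
  have hzero : h 0 = 0 := intervalIntegral.integral_same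
  have hmono : ∀ a b, -r ≤ a → b < Jinf → a < b → h a < h b := by
    intro a b ha hb hab
    have haJ : a < Jinf := hab.trans hb
    have hrb : -r ≤ b := ha.trans hab.le
    have hI1 : IntervalIntegrable (fun u => (g u)⁻¹) volume 0 a :=
      hintg 0 a (by linarith) ha hJinfpos haJ
    have hI2 : IntervalIntegrable (fun u => (g u)⁻¹) volume a b :=
      hintg a b ha hrb haJ hb
    have hadd : h a + ∫ u in a..b, (g u)⁻¹ = h b :=
      intervalIntegral.integral_add_adjacent_intervals hI1 hI2
    have hpos : 0 < ∫ u in a..b, (g u)⁻¹ := by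
      apply intervalIntegral.intervalIntegral_pos_of_pos_on hI2
      · intro u hu
        exact inv_pos.mpr (hgpos u (ha.trans hu.1.le) (hu.2.trans hb))
      · exact hab
    linarith
  have hmono' : ∀ a b, -r ≤ a → b < Jinf → a ≤ b → h a ≤ h b := by
    intro a b ha hb hab
    rcases lt_or_eq_of_le hab with hlt | heq
    · exact (hmono a b ha hb hlt).le
    · rw [heq]
  have hderiv : ∀ J, -r < J → J < Jinf → HasDerivAt h (g J)⁻¹ J := by
    intro J hJ1 hJ2
    apply intervalIntegral.integral_hasDerivAt_right
      (hintg 0 J (by linarith) hJ1.le hJinfpos hJ2)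
    · exact ((sirG_cont R Sbar I0).measurable.inv).stronglyMeasurable.stronglyMeasurableAtFilter
    · exact ContinuousAt.inv₀ ((sirG_cont R Sbar I0).continuousAt)
        (hgpos J hJ1.le hJ2).ne'
  -- Step I : divergence of h near Jinf
  have hdiv : ∀ T : ℝ, ∃ J, 0 ≤ J ∧ J < Jinf ∧ T < h J := by
    intro T
    set e := Real.exp (-(|T| + 1)) with hedef
    have he1 : 0 < e := Real.exp_pos _
    have he2 : e < 1 := by
      rw [hedef]
      apply Real.exp_lt_one_iff.mpr
      have := abs_nonneg T
      linarith
    set J := Jinf * (1 - e) with hJdef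
    have hJ0 : 0 ≤ J := by nlinarith
    have hJJ : J < Jinf := by nlinarith
    refine ⟨J, hJ0, hJJ, ?_⟩
    have hcomp : (∫ u in (0:ℝ)..J, (Jinf - u)⁻¹) ≤ h J := by
      apply intervalIntegral.integral_mono_on hJ0
      · apply ContinuousOn.intervalIntegrable
        apply ContinuousOn.inv₀ (by fun_prop)
        intro u hu
        rw [uIcc_of_le hJ0] at hu
        have : u < Jinf := lt_of_le_of_lt hu.2 hJJ
        exact (sub_pos.mpr this).ne'
      · exact hintg 0 J (by linarith) (by linarith) hJinfpos hJJ
      · intro u hu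
        have h1 : 0 < g u := hgpos u (by linarith [hu.1]) (lt_of_le_of_lt hu.2 hJJ)
        have h2 : g u ≤ Jinf - u := hgub u hu.1 (hu.2.trans hJJ.le)
        exact inv_anti₀ h1 h2
    have hcalc : (∫ u in (0:ℝ)..J, (Jinf - u)⁻¹) = |T| + 1 := by
      have := intervalIntegral.integral_comp_sub_left (fun x : ℝ => x⁻¹) Jinf
        (a := 0) (b := J)
      rw [this]
      rw [integral_inv_of_pos (by nlinarith) (by simpa using hJinfpos)]
      rw [sub_zero]
      have hJJe : Jinf - J = Jinf * e := by rw [hJdef]; ring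
      rw [hJJe]
      rw [show Jinf / (Jinf * e) = e⁻¹ by field_simp]
      rw [Real.log_inv, hedef, Real.log_exp]
      ring
    have := lt_of_lt_of_le (by rw [hcalc]; exact lt_of_le_of_lt (le_abs_self T) (by linarith) : T < (∫ u in (0:ℝ)..J, (Jinf - u)⁻¹)) hcomp
    exact this
  -- Step J : base point and surjectivity
  set a0 : ℝ := -r / 2 with ha0def
  have ha0neg : a0 < 0 := by rw [ha0def]; linarith
  have ha0r : -r < a0 := by rw [ha0def]; linarith
  set A := h a0 with hAdef
  have hAneg : A < 0 := by
    rw [hAdef, ← hzero]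
    exact hmono a0 0 ha0r.le hJinfpos ha0neg
  have hsurj : ∀ τ, A ≤ τ → ∃ J, a0 ≤ J ∧ J < Jinf ∧ h J = τ := by
    intro τ hτ
    obtain ⟨Jb, hJb0, hJbI, hJbT⟩ := hdiv τ
    have ha0Jb : a0 ≤ Jb := le_trans ha0neg.le hJb0
    have hcontOn : ContinuousOn h (Icc a0 Jb) := by
      intro x hx
      exact (hderiv x (lt_of_lt_of_le ha0r hx.1) (lt_of_le_of_lt hx.2 hJbI)
        ).continuousAt.continuousWithinAt
    have := intermediate_value_Icc ha0Jb hcontOn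
    have hmem : τ ∈ Icc (h a0) (h Jb) := ⟨hτ, hJbT.le⟩
    obtain ⟨J, hJmem, hJval⟩ := this hmem
    exact ⟨J, hJmem.1, lt_of_le_of_lt hJmem.2 hJbI, hJval⟩
  -- Step K : Jsol
  set Jsol : ℝ → ℝ := fun τ => if hτ : A ≤ τ then (hsurj τ hτ).choose else 0
    with hJsoldef
  have hJsolspec : ∀ τ, A ≤ τ → a0 ≤ Jsol τ ∧ Jsol τ < Jinf ∧ h (Jsol τ) = τ := by
    intro τ hτ
    rw [hJsoldef]
    simp only [dif_pos hτ]
    exact (hsurj τ hτ).choose_spec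
  have huniq : ∀ τ J, A ≤ τ → a0 ≤ J → J < Jinf → h J = τ → Jsol τ = J := by
    intro τ J hτ hJ1 hJ2 hJv
    obtain ⟨k1, k2, k3⟩ := hJsolspec τ hτ
    by_contra hne
    rcases lt_or_gt_of_ne hne with hlt | hlt
    · have := hmono (Jsol τ) J (le_trans ha0r.le k1) hJ2 hlt
      rw [k3, hJv] at this; exact lt_irrefl _ this
    · have := hmono J (Jsol τ) (le_trans ha0r.le hJ1) k2 hlt
      rw [k3, hJv] at this; exact lt_irrefl _ this
  have hJsol0 : Jsol 0 = 0 :=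
    huniq 0 0 hAneg.le ha0neg.le hJinfpos hzero
  have hJsolnn : ∀ τ, 0 ≤ τ → 0 ≤ Jsol τ := by
    intro τ hτ
    obtain ⟨k1, k2, k3⟩ := hJsolspec τ (hAneg.le.trans hτ)
    by_contra hneg
    push_neg at hneg
    have := hmono (Jsol τ) 0 (le_trans ha0r.le k1) hJinfpos hneg
    rw [k3, hzero] at this
    linarith
  -- Step L : continuity of Jsol at τ ≥ 0
  have hJcont : ∀ τ, 0 ≤ τ → ContinuousAt Jsol τ := by
    intro τ hτ
    obtain ⟨k1, k2, k3⟩ := hJsolspec τ (hAneg.le.trans hτ)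
    set J0 := Jsol τ with hJ0def
    have hJ0nn : 0 ≤ J0 := hJsolnn τ hτ
    rw [Metric.continuousAt_iff]
    intro η hη
    set l := max (J0 - η / 2) a0 with hldef
    set u := min (J0 + η / 2) ((J0 + Jinf) / 2) with hudef
    have hlJ0 : l < J0 := by
      rw [hldef]
      apply max_lt (by linarith) (lt_of_lt_of_le ha0neg hJ0nn)
    have hJ0u : J0 < u := by
      rw [hudef]
      apply lt_min (by linarith) (by linarith)
    have hlr : -r < l := lt_of_lt_of_le ha0r (le_max_right _ _)
    have huJ : u < Jinf := lt_of_le_of_lt (min_le_right _ _) (by linarith)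
    have hhl : h l < τ := by rw [← k3]; exact hmono l J0 hlr.le k2 hlJ0
    have hhu : τ < h u := by rw [← k3]; exact hmono J0 u (le_trans ha0r.le k1) huJ hJ0u
    refine ⟨min (τ - h l) (h u - τ), by
      apply lt_min <;> linarith, ?_⟩
    intro τ' hτ'
    rw [Real.dist_eq] at hτ'
    have hm := abs_lt.mp hτ'
    have hmin := lt_min_iff.mp (lt_of_le_of_lt (le_abs_self _) hτ')
    have hmin' := lt_min_iff.mp (lt_of_le_of_lt (neg_le_abs _) hτ')
    have hlJinf : l < Jinf := hlJ0.trans k2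
    have h1 : h l < τ' := by
      have : -(τ' - τ) < τ - h l := by
        rcases abs_lt.mp hτ' with ⟨hh1, _⟩
        have := lt_min_iff.mp hτ'
        linarith [this.1]
      linarith
    have h2 : τ' < h u := by
      have := lt_min_iff.mp (lt_of_le_of_lt (le_abs_self _) hτ')
      linarith [this.2]
    have hA' : A ≤ τ' := by
      have : h a0 ≤ h l := hmono' a0 l ha0r.le hlJinf (le_max_right _ _)
      rw [hAdef]; linarith
    obtain ⟨m1, m2, m3⟩ := hJsolspec τ' hA'
    have hl' : l < Jsol τ' := by
      by_contra hc
      push_neg at hc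
      have := hmono' (Jsol τ') l (le_trans ha0r.le m1) hlJinf hc
      rw [m3] at this
      linarith
    have hu' : Jsol τ' < u := by
      by_contra hc
      push_neg at hc
      have := hmono' u (Jsol τ') (by linarith) m2 hc
      rw [m3] at this
      linarith
    rw [Real.dist_eq, abs_lt]
    constructor
    · have : J0 - η / 2 ≤ l := le_max_left _ _
      linarith
    · have : u ≤ J0 + η / 2 := min_le_left _ _
      linarith
  -- Step M : derivative of Jsol
  have hJsolderiv : ∀ τ, 0 ≤ τ → HasDerivAt Jsol (g (Jsol τ)) τ := by
    intro τ hτ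
    obtain ⟨k1, k2, k3⟩ := hJsolspec τ (hAneg.le.trans hτ)
    have hgJ : 0 < g (Jsol τ) := hgpos _ (le_trans ha0r.le k1) k2
    have hfg : ∀ᶠ τ' in nhds τ, h (Jsol τ') = τ' := by
      have hIoi : Ioi A ∈ nhds τ := isOpen_Ioi.mem_nhds (lt_of_lt_of_le hAneg hτ)
      filter_upwards [hIoi] with τ' hτ'
      exact (hJsolspec τ' (le_of_lt hτ')).2.2
    have := HasDerivAt.of_local_left_inverse (hJcont τ hτ)
      (hderiv (Jsol τ) (lt_of_lt_of_le ha0r k1) k2) (inv_ne_zero hgJ.ne') hfg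
    simpa using this
  -- Step N : the solution functions
  refine ⟨fun τ => Sbar * Real.exp (-R * Jsol τ), fun τ => g (Jsol τ),
    fun τ => (1 - Sbar) + Jsol τ, ?_, ?_, ?_, ?_, ?_, ?_, ?_⟩
  · intro τ hτ
    have h1 : HasDerivAt (fun τ => -R * Jsol τ) (-R * g (Jsol τ)) τ :=
      (hJsolderiv τ hτ).const_mul (-R)
    have h2 := (h1.exp).const_mul Sbar
    refine h2.congr_deriv ?_
    ring
  · intro τ hτ
    have h1 := (sirG_hasDerivAt R Sbar I0 (Jsol τ)).comp τ (hJsolderiv τ hτ)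
    have h2 : (fun τ => g (Jsol τ)) = g ∘ Jsol := rfl
    rw [h2]
    refine h1.congr_deriv ?_
    simp only [Function.comp_apply]
    ring
  · intro τ hτ
    exact (hJsolderiv τ hτ).const_add (1 - Sbar)
  · show Sbar * Real.exp (-R * Jsol 0) = Sbar
    rw [hJsol0]; simp
  · show g (Jsol 0) = I0
    rw [hJsol0]; exact hg0
  · show (1 - Sbar) + Jsol 0 = 1 - Sbar
    rw [hJsol0]; ring
  · have hint0 := hmono 0 Jt (by linarith) (by linarith : Jt < Jinf) hJtpos
    rw [hzero] at hint0
    refine ⟨h Jt, hint0.le, ?_⟩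
    show (1 - Sbar) + Jsol (h Jt) - (1 - Sbar) = Real.log (R * Sbar) / R
    have hA' : A ≤ h Jt := by linarith
    rw [huniq (h Jt) Jt hA' (by linarith : a0 ≤ Jt) hJtJinf rfl]
    rw [hJtdef]; ring

theorem sir_equilibrium_unstable (R Sbar : ℝ) (hR : 1 < R)
    (hSbar : 1 / R < Sbar) (hSbar1 : Sbar ≤ 1) :
    ¬ (∀ ε > (0:ℝ), ∃ δ > (0:ℝ), ∀ S I C : ℝ → ℝ,
        (∀ τ ≥ (0:ℝ), HasDerivAt S (-R * S τ * I τ) τ) →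
        (∀ τ ≥ (0:ℝ), HasDerivAt I (R * S τ * I τ - I τ) τ) →
        (∀ τ ≥ (0:ℝ), HasDerivAt C (I τ) τ) →
        ‖((S 0, I 0, C 0) : ℝ × ℝ × ℝ) - (Sbar, 0, 1 - Sbar)‖ < δ →
        ∀ τ ≥ (0:ℝ), ‖((S τ, I τ, C τ) : ℝ × ℝ × ℝ) - (Sbar, 0, 1 - Sbar)‖ < ε) := by
  intro H
  have hRpos : 0 < R := by linarith
  have hSpos : 0 < Sbar := lt_trans (by positivity) hSbar
  have hRS : 1 < R * Sbar := by
    have := (div_lt_iff₀ hRpos).mp hSbar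
    nlinarith
  set ε := Real.log (R * Sbar) / R with hεdef
  have hεpos : 0 < ε := div_pos (Real.log_pos hRS) hRpos
  obtain ⟨δ, hδpos, Hδ⟩ := H ε hεpos
  obtain ⟨S, I, C, hS, hI, hC, hS0, hI0, hC0, τ1, hτ1, hesc⟩ :=
    sir_aux R Sbar (δ / 2) hRpos hSpos hRS (by positivity)
  have hinit : ‖((S 0, I 0, C 0) : ℝ × ℝ × ℝ) - (Sbar, 0, 1 - Sbar)‖ < δ := by
    rw [hS0, hI0, hC0]
    have : ((Sbar, δ / 2, 1 - Sbar) : ℝ × ℝ × ℝ) - (Sbar, 0, 1 - Sbar)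
        = ((0 : ℝ), (δ / 2 : ℝ), (0 : ℝ)) := by
      simp [Prod.ext_iff]
    rw [this]
    rw [Prod.norm_def, Prod.norm_def]
    simp only [norm_zero, Real.norm_eq_abs]
    rw [abs_of_pos (by positivity : (0:ℝ) < δ / 2)]
    rw [max_eq_right (le_max_of_le_left (by positivity))]
    rw [max_eq_left (by positivity)]
    linarith
  have hlt := Hδ S I C hS hI hC hinit τ1 hτ1
  have hge : ε ≤ ‖((S τ1, I τ1, C τ1) : ℝ × ℝ × ℝ) - (Sbar, 0, 1 - Sbar)‖ := by
    have h1 : (((S τ1, I τ1, C τ1) : ℝ × ℝ × ℝ) - (Sbar, 0, 1 - Sbar)).2.2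
        = C τ1 - (1 - Sbar) := rfl
    calc ε = |C τ1 - (1 - Sbar)| := by rw [hesc]; exact (abs_of_pos hεpos).symm
    _ = ‖(((S τ1, I τ1, C τ1) : ℝ × ℝ × ℝ) - (Sbar, 0, 1 - Sbar)).2.2‖ := by
        rw [h1, Real.norm_eq_abs]
    _ ≤ ‖(((S τ1, I τ1, C τ1) : ℝ × ℝ × ℝ) - (Sbar, 0, 1 - Sbar)).2‖ := norm_snd_le _
    _ ≤ _ := norm_snd_le _
  linarith
end

section
/- The final-size equation s = S₀·exp(-R·(S₀ + I₀ - s)) has a unique solution s ∈ (0, 1/R) whenever R > 0, S₀ > 0, I₀ > 0. -/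
theorem final_size_unique_solution (R S₀ I₀ : ℝ) (hR : 0 < R)
    (hS₀ : S₀ ∈ Set.Ioc (0:ℝ) 1) (hI₀ : I₀ ∈ Set.Ioc (0:ℝ) 1)
    (hsum : S₀ + I₀ ≤ 1) :
    ∃! s : ℝ, s ∈ Set.Ioo 0 (1 / R) ∧ s = S₀ * Real.exp (-R * (S₀ + I₀ - s)) := by
  obtain ⟨hS0, hS1⟩ := hS₀
  obtain ⟨hI0, hI1⟩ := hI₀
  set g : ℝ → ℝ := fun s => S₀ * Real.exp (-R * (S₀ + I₀ - s)) with hg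
  have hgpos : ∀ s, 0 < g s := fun s => mul_pos hS0 (Real.exp_pos _)
  have hgmono : StrictMono g := by
    intro x y hxy
    refine mul_lt_mul_of_pos_left (Real.exp_lt_exp.2 ?_) hS0
    nlinarith
  have hgcont : Continuous g := by
    apply Continuous.mul continuous_const
    exact Real.continuous_exp.comp (by continuity)
  set f : ℝ → ℝ := fun s => g s - s with hf
  have hfc : Continuous f := hgcont.sub continuous_id
  have hRinv : 0 < 1 / R := by positivity
  have hf0 : 0 < f 0 := by
    have := hgpos 0
    simp only [hf, sub_zero]
    linarith
  have hfr : f (1 / R) < 0 := by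
    have hexp : Real.exp (-R * (S₀ + I₀ - 1 / R))
        = Real.exp (1 - R * S₀) * Real.exp (-(R * I₀)) := by
      rw [← Real.exp_add]
      congr 1
      field_simp
      ring
    have h1 : R * S₀ * Real.exp (1 - R * S₀) ≤ 1 := by
      have := Real.add_one_le_exp (R * S₀ - 1)
      have h2 : Real.exp (1 - R * S₀) * Real.exp (R * S₀ - 1) = 1 := by
        rw [← Real.exp_add]; simp
      nlinarith [Real.exp_pos (1 - R * S₀)]
    have h3 : Real.exp (-(R * I₀)) < 1 := by
      rw [Real.exp_lt_one_iff]
      nlinarith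
    have key : R * g (1 / R) < 1 := by
      simp only [hg, hexp]
      nlinarith [mul_pos (mul_pos hR hS0) (Real.exp_pos (1 - R * S₀)), Real.exp_pos (-(R * I₀))]
    have : g (1 / R) < 1 / R := by
      rw [lt_div_iff₀ hR]
      linarith [key]
    simp only [hf]
    linarith
  -- Existence via IVT
  have hmem : (0 : ℝ) ∈ Set.Ioo (f (1 / R)) (f 0) := ⟨hfr, hf0⟩
  have := intermediate_value_Ioo' (le_of_lt hRinv) hfc.continuousOn hmem
  obtain ⟨s, hs, hfs⟩ := this
  have hsol : s ∈ Set.Ioo 0 (1 / R) ∧ s = S₀ * Real.exp (-R * (S₀ + I₀ - s)) := by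
    refine ⟨hs, ?_⟩
    have : g s - s = 0 := hfs
    have : g s = s := by linarith
    simpa [hg] using this.symm
  -- derivative of f
  have hd : ∀ x : ℝ, HasDerivAt f (g x * R - 1) x := by
    intro x
    have h1 : HasDerivAt (fun s : ℝ => -R * (S₀ + I₀ - s)) R x := by
      have h := ((hasDerivAt_id x).const_sub (S₀ + I₀)).const_mul (-R)
      refine h.congr_deriv ?_
      ring
    have h2 := (h1.exp.const_mul S₀).sub (hasDerivAt_id x)
    refine h2.congr_deriv ?_
    simp only [hg]
    ring
  -- Uniqueness
  have huniq : ∀ a b : ℝ, a ∈ Set.Ioo 0 (1 / R) → b ∈ Set.Ioo 0 (1 / R) →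
      a = g a → b = g b → a < b → False := by
    intro a b ha hb hga hgb hab
    have hfa : f a = 0 := by simp only [hf]; linarith [hga]
    have hfb : f b = 0 := by simp only [hf]; linarith [hgb]
    obtain ⟨c, hc, hcd⟩ := exists_hasDerivAt_eq_slope f (fun x => g x * R - 1) hab
      hfc.continuousOn (fun x _ => hd x)
    rw [hfa, hfb] at hcd
    simp at hcd
    -- hcd : g c * R - 1 = 0, so g c = 1 / R
    have hgc : g c = 1 / R := by
      field_simp
      linarith [hcd]
    have : g c < g b := hgmono hc.2
    rw [hgc, ← hgb] at this
    exact absurd this (not_lt.2 (le_of_lt hb.2))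
  refine ⟨s, hsol, ?_⟩
  intro y hy
  rcases lt_trichotomy y s with h | h | h
  · exact absurd (huniq y s hy.1 hsol.1 hy.2 hsol.2 h) id
  · exact h
  · exact absurd (huniq s y hsol.1 hy.1 hsol.2 hy.2 h) id
end

section
/- The final size of susceptibles always lies strictly below the herd immunity threshold: if R > 1, S₀ > 0, I₀ > 0, and s solves s = S₀·exp(-R·(S₀ + I₀ - s)) with 0 < s ≤ 1/R, then s < 1/R (strictly) unless I₀ = 0. -/
theorem final_size_below_herd_immunity (R S₀ I₀ s : ℝ) (hR : 1 < R)
    (hS₀ : S₀ ∈ Set.Ioc (0:ℝ) 1) (hI₀ : I₀ ∈ Set.Ioc (0:ℝ) 1)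
    (hs : s ∈ Set.Ioc 0 (1 / R))
    (heq : s = S₀ * Real.exp (-R * (S₀ + I₀ - s))) :
    s < 1 / R := by
  rcases lt_or_eq_of_le hs.2 with h | h
  · exact h
  · exfalso
    have hR0 : (0:ℝ) < R := by linarith
    have hRne : R ≠ 0 := ne_of_gt hR0
    subst h
    have hexp : -R * (S₀ + I₀ - 1 / R) = (1 - R * S₀) + (-(R * I₀)) := by
      field_simp; ring
    rw [hexp, Real.exp_add] at heq
    have h1 : R * S₀ ≤ Real.exp (R * S₀ - 1) := by
      have := Real.add_one_le_exp (R * S₀ - 1)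
      linarith
    have h2 : Real.exp (-(R * I₀)) < 1 := by
      rw [Real.exp_lt_one_iff]
      nlinarith [hI₀.1]
    have h3 : Real.exp (R * S₀ - 1) * Real.exp (1 - R * S₀) = 1 := by
      rw [← Real.exp_add]; norm_num
    have h4 : 0 < Real.exp (1 - R * S₀) := Real.exp_pos _
    have h5 : 0 < Real.exp (-(R * I₀)) := Real.exp_pos _
    have hkey : R * S₀ * Real.exp (1 - R * S₀) ≤ 1 := by
      nlinarith
    have heq' : 1 = R * S₀ * (Real.exp (1 - R * S₀) * Real.exp (-(R * I₀))) := by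
      field_simp at heq
      linarith [heq]
    nlinarith [hS₀.1]
end

section
/- As R → ∞ with fixed S₀ > 0 and I₀ > 0, the final susceptible fraction tends to zero: lim_{R→∞} -W(-R·S₀·e^{-R·(S₀+I₀)})/R = 0. -/
theorem final_size_tendsto_zero_R_large (S₀ I₀ : ℝ) (W : ℝ → ℝ)
    (hS₀ : 0 < S₀) (hI₀ : 0 < I₀)
    (hW : ∀ x ∈ Set.Ioo (-Real.exp (-1)) 0,
      W x ∈ Set.Ioo (-1:ℝ) 0 ∧ W x * Real.exp (W x) = x) :
    Filter.Tendsto (fun R : ℝ => -W (-R * S₀ * Real.exp (-R * (S₀ + I₀))) / R)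
      Filter.atTop (nhds 0) := by
  have hc : 0 < S₀ + I₀ := by linarith
  -- the argument tends to 0 from below
  have h0 : Filter.Tendsto (fun R : ℝ => R * S₀ * Real.exp (-R * (S₀ + I₀)))
      Filter.atTop (nhds 0) := by
    have h1 : Filter.Tendsto (fun x : ℝ => x ^ 1 * Real.exp (-x)) Filter.atTop (nhds 0) :=
      Real.tendsto_pow_mul_exp_neg_atTop_nhds_zero 1
    have h2 : Filter.Tendsto (fun R : ℝ => R * (S₀ + I₀)) Filter.atTop Filter.atTop :=
      Filter.Tendsto.atTop_mul_const hc Filter.tendsto_id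
    have h3 := (h1.comp h2).const_mul (S₀ / (S₀ + I₀))
    rw [mul_zero] at h3
    refine h3.congr fun R => ?_
    have hne : (S₀ + I₀) ≠ 0 := ne_of_gt hc
    simp only [Function.comp, pow_one]
    rw [neg_mul]
    field_simp
  have hev : ∀ᶠ R : ℝ in Filter.atTop,
      R * S₀ * Real.exp (-R * (S₀ + I₀)) < Real.exp (-1) :=
    h0.eventually_lt_const (Real.exp_pos _)
  have hpos : ∀ᶠ R : ℝ in Filter.atTop, (0:ℝ) < R :=
    Filter.eventually_gt_atTop 0
  have key : ∀ᶠ R : ℝ in Filter.atTop,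
      W (-R * S₀ * Real.exp (-R * (S₀ + I₀))) ∈ Set.Ioo (-1:ℝ) 0 := by
    filter_upwards [hev, hpos] with R h1 h2
    have harg : -R * S₀ * Real.exp (-R * (S₀ + I₀)) ∈ Set.Ioo (-Real.exp (-1)) 0 := by
      constructor
      · have : -R * S₀ * Real.exp (-R * (S₀ + I₀)) = -(R * S₀ * Real.exp (-R * (S₀ + I₀))) := by
          ring
        rw [this]
        linarith
      · have : (0:ℝ) < R * S₀ * Real.exp (-R * (S₀ + I₀)) :=
          mul_pos (mul_pos h2 hS₀) (Real.exp_pos _)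
        nlinarith
    exact (hW _ harg).1
  refine tendsto_of_tendsto_of_tendsto_of_le_of_le' (g := fun _ : ℝ => (0:ℝ))
    (h := fun R : ℝ => 1 / R) tendsto_const_nhds ?_ ?_ ?_
  · simpa only [one_div] using tendsto_inv_atTop_zero
  · filter_upwards [key, hpos] with R h1 h2
    exact div_nonneg (by linarith [h1.2]) h2.le
  · filter_upwards [key, hpos] with R h1 h2
    have h3 : -W (-R * S₀ * Real.exp (-R * (S₀ + I₀))) ≤ 1 := by
      have := h1.1; linarith
    exact div_le_div_of_nonneg_right h3 h2.le
end

section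
/- If S₀ = 1/R and I₀ → 0⁺, then the final susceptible fraction tends to the herd immunity threshold: the solution s(I₀) ∈ (0, 1/R) of s = S₀·exp(-R·(S₀ + I₀ - s)) satisfies lim_{I₀→0⁺} s(I₀) = 1/R. -/
/-- `x ↦ x - log x` is antitone on `(0,1]`. -/
lemma g_anti {x y : ℝ} (hx : 0 < x) (hxy : x ≤ y) (hy1 : y ≤ 1) :
    y - Real.log y ≤ x - Real.log x := by
  have hy : 0 < y := lt_of_lt_of_le hx hxy
  have h2 : Real.log (x / y) ≤ x / y - 1 := Real.log_le_sub_one_of_pos (div_pos hx hy)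
  rw [Real.log_div hx.ne' hy.ne'] at h2
  -- log x - log y ≤ x/y - 1, so log y - log x ≥ 1 - x/y = (y-x)/y ≥ y - x
  have key : y - x ≤ Real.log y - Real.log x := by
    have h3 : y * (Real.log x - Real.log y) ≤ y * (x / y - 1) :=
      mul_le_mul_of_nonneg_left h2 hy.le
    have h4 : y * (x / y - 1) = x - y := by field_simp
    rw [h4] at h3
    have hL : Real.log x ≤ Real.log y := Real.log_le_log hx hxy
    nlinarith [mul_nonneg (sub_nonneg.2 hL) (sub_nonneg.2 hy1)]
  linarith

theorem final_size_tendsto_herd_immunity (R : ℝ) (hR : 1 < R) (s : ℝ → ℝ)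
    (hs : ∀ I₀ > (0:ℝ), s I₀ ∈ Set.Ioo 0 (1 / R) ∧
      s I₀ = (1 / R) * Real.exp (-R * (1 / R + I₀ - s I₀))) :
    Filter.Tendsto s (nhdsWithin 0 (Set.Ioi 0)) (nhds (1 / R)) := by
  have hR0 : (0:ℝ) < R := lt_trans one_pos hR
  rw [Metric.tendsto_nhdsWithin_nhds]
  intro ε hε
  set ε' : ℝ := min ε (1 / (2 * R)) with hε'def
  have hε'pos : 0 < ε' := lt_min hε (by positivity)
  have hε'le : ε' ≤ ε := min_le_left _ _
  have hRε' : R * ε' < 1 := by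
    have : ε' ≤ 1 / (2 * R) := min_le_right _ _
    have h1 : ε' * (2 * R) ≤ 1 := (le_div_iff₀ (by positivity)).mp this
    nlinarith
  have hy0 : 0 < 1 - R * ε' := by linarith
  -- log (1 - R ε') < - R ε'
  have hlog : Real.log (1 - R * ε') < -(R * ε') := by
    have h1 : 1 - R * ε' < Real.exp (-(R * ε')) := by
      have := Real.add_one_lt_exp (x := -(R * ε')) (by nlinarith)
      linarith
    have := Real.log_lt_log hy0 h1
    rwa [Real.log_exp] at this
  set c : ℝ := -(R * ε') - Real.log (1 - R * ε') with hcdef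
  have hc : 0 < c := by simp only [hcdef]; linarith
  refine ⟨c / R, by positivity, ?_⟩
  intro I₀ hI₀ hdist
  have hI₀' : 0 < I₀ := hI₀
  obtain ⟨⟨hspos, hslt⟩, heq⟩ := hs I₀ hI₀'
  rw [Real.dist_eq] at hdist ⊢
  rw [sub_zero, abs_of_pos hI₀'] at hdist
  -- key: s I₀ > 1/R - ε'
  have hmain : 1 / R - ε' < s I₀ := by
    by_contra h
    push_neg at h
    -- let x = R * s I₀; then x - log x = 1 + R * I₀
    set x : ℝ := R * s I₀ with hxdef
    have hx0 : 0 < x := by positivity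
    have hxy : x ≤ 1 - R * ε' := by
      have : R * s I₀ ≤ R * (1 / R - ε') := by nlinarith
      calc x ≤ R * (1 / R - ε') := this
        _ = 1 - R * ε' := by field_simp
    -- compute log x
    have hlogx : Real.log x = x - 1 - R * I₀ := by
      have hlogs : Real.log (s I₀) =
          Real.log (1 / R) + (-R * (1 / R + I₀ - s I₀)) := by
        conv_lhs => rw [heq]
        rw [Real.log_mul (by positivity) (Real.exp_pos _).ne', Real.log_exp]
      have hlogR : Real.log (1 / R) = -Real.log R := by
        rw [Real.log_div one_ne_zero hR0.ne', Real.log_one]; ring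
      have : Real.log x = Real.log R + Real.log (s I₀) :=
        Real.log_mul hR0.ne' hspos.ne'
      rw [this, hlogs, hlogR]
      have hRinv : R * (1 / R) = 1 := by field_simp
      simp only [hxdef]
      nlinarith
    -- apply antitonicity
    have := g_anti hx0 hxy (by nlinarith [mul_pos hR0 hε'pos])
    rw [hlogx] at this
    -- (1 - Rε') - log(1 - Rε') ≤ x - (x - 1 - R I₀) = 1 + R I₀
    have hcle : c ≤ R * I₀ := by simp only [hcdef]; linarith
    have h5 : I₀ * R < c := (lt_div_iff₀ hR0).mp hdist
    nlinarith
  have : |s I₀ - 1 / R| = 1 / R - s I₀ := by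
    rw [abs_of_nonpos (by linarith)]; ring
  rw [this]
  linarith
end
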